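/- arXiv:1906.06802 — 3 statements merged into one kernel-verified Lean document; each statement's English description precedes it below -/
import Mathlib

section
/- Let λ ∈ ℂ \ {0}, f_λ(z) = λ·tan z, and let W ⊆ ℂ be a nonempty connected open set with cos z ≠ 0 for all z ∈ W. If the closure of f_λ(W) in ℂ is disjoint from {iλ, −iλ}, then there exists R > 0 such that W ⊆ {z ∈ ℂ : |Im z| < R}. -/
open Complex Filter Topology

private lemma tanPaper_denom_eq (z : ℂ) :
    1 + Complex.exp (2*z*I) = 2 * Complex.cos z * Complex.exp (z*I) := by
  rw [Complex.cos]
  have h1 : Complex.exp (2*z*I) = Complex.exp (z*I) * Complex.exp (z*I) := by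
    rw [← Complex.exp_add]; ring_nf
  have h2 : Complex.exp (-z*I) * Complex.exp (z*I) = 1 := by
    rw [← Complex.exp_add]; norm_num
  linear_combination h1 - h2

private lemma tanPaper_formula (z : ℂ) (hz : Complex.cos z ≠ 0) :
    Complex.tan z = I * (1 - Complex.exp (2*z*I)) / (1 + Complex.exp (2*z*I)) := by
  have hd : (1 + Complex.exp (2*z*I)) ≠ 0 := by
    rw [tanPaper_denom_eq]
    exact mul_ne_zero (mul_ne_zero two_ne_zero hz) (Complex.exp_ne_zero _)
  rw [Complex.tan, div_eq_div_iff hz hd]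
  rw [Complex.sin, Complex.cos]
  have h1 : Complex.exp (2*z*I) = Complex.exp (z*I) * Complex.exp (z*I) := by
    rw [← Complex.exp_add]; ring_nf
  have h2 : Complex.exp (-z*I) * Complex.exp (z*I) = 1 := by
    rw [← Complex.exp_add]; norm_num
  rw [h1]
  linear_combination (I * Complex.exp (z*I)) * h2

private lemma tanPaper_formula' (z : ℂ) (hz : Complex.cos z ≠ 0) :
    Complex.tan z = I * (Complex.exp (-(2*z*I)) - 1) / (Complex.exp (-(2*z*I)) + 1) := by
  have hd : (1 + Complex.exp (2*z*I)) ≠ 0 := by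
    rw [tanPaper_denom_eq]
    exact mul_ne_zero (mul_ne_zero two_ne_zero hz) (Complex.exp_ne_zero _)
  have hiv : Complex.exp (-(2*z*I)) * Complex.exp (2*z*I) = 1 := by
    rw [← Complex.exp_add]; norm_num
  have hd' : Complex.exp (-(2*z*I)) + 1 ≠ 0 := by
    have : Complex.exp (-(2*z*I)) + 1 = Complex.exp (-(2*z*I)) * (1 + Complex.exp (2*z*I)) := by
      linear_combination -hiv
    rw [this]
    exact mul_ne_zero (Complex.exp_ne_zero _) hd
  rw [tanPaper_formula z hz, div_eq_div_iff hd hd']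
  linear_combination (-2*I) * hiv

private lemma tanPaper_tendsto_top (s : ℕ → ℂ) (hcos : ∀ n, Complex.cos (s n) ≠ 0)
    (him : Tendsto (fun n => (s n).im) atTop atTop) :
    Tendsto (fun n => Complex.tan (s n)) atTop (nhds I) := by
  have hw : Tendsto (fun n => Complex.exp (2 * s n * I)) atTop (nhds 0) := by
    rw [tendsto_zero_iff_norm_tendsto_zero]
    have hnorm : ∀ n, ‖Complex.exp (2 * s n * I)‖ = Real.exp (-(2 * (s n).im)) := by
      intro n
      rw [Complex.norm_exp]
      congr 1
      simp [Complex.mul_re, Complex.mul_im]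
    simp only [hnorm]
    have hib : Tendsto (fun n => -(2 * (s n).im)) atTop atBot := by
      apply tendsto_neg_atBot_iff.mpr
      exact him.const_mul_atTop two_pos
    exact Real.tendsto_exp_atBot.comp hib
  have h1 : Tendsto (fun n => I * (1 - Complex.exp (2 * s n * I))) atTop (nhds (I * (1 - 0))) :=
    tendsto_const_nhds.mul (tendsto_const_nhds.sub hw)
  have h2 : Tendsto (fun n => 1 + Complex.exp (2 * s n * I)) atTop (nhds (1 + 0)) :=
    tendsto_const_nhds.add hw
  have hlim := h1.div h2 (by norm_num)
  refine Tendsto.congr (fun n => (tanPaper_formula (s n) (hcos n)).symm) ?_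
  simpa [Pi.div_def] using hlim

private lemma tanPaper_tendsto_bot (s : ℕ → ℂ) (hcos : ∀ n, Complex.cos (s n) ≠ 0)
    (him : Tendsto (fun n => (s n).im) atTop atBot) :
    Tendsto (fun n => Complex.tan (s n)) atTop (nhds (-I)) := by
  have hw : Tendsto (fun n => Complex.exp (-(2 * s n * I))) atTop (nhds 0) := by
    rw [tendsto_zero_iff_norm_tendsto_zero]
    have hnorm : ∀ n, ‖Complex.exp (-(2 * s n * I))‖ = Real.exp (2 * (s n).im) := by
      intro n
      rw [Complex.norm_exp]
      congr 1
      simp [Complex.mul_re, Complex.mul_im]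
    simp only [hnorm]
    have hib : Tendsto (fun n => 2 * (s n).im) atTop atBot :=
      him.const_mul_atBot two_pos
    exact Real.tendsto_exp_atBot.comp hib
  have h1 : Tendsto (fun n => I * (Complex.exp (-(2 * s n * I)) - 1)) atTop
      (nhds (I * (0 - 1))) := tendsto_const_nhds.mul (hw.sub tendsto_const_nhds)
  have h2 : Tendsto (fun n => Complex.exp (-(2 * s n * I)) + 1) atTop (nhds (0 + 1)) :=
    hw.add tendsto_const_nhds
  have hlim := h1.div h2 (by norm_num)
  refine Tendsto.congr (fun n => (tanPaper_formula' (s n) (hcos n)).symm) ?_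
  have : I * (0 - 1) / (0 + 1) = -I := by norm_num
  rw [this] at hlim
  exact hlim

/-- **Proposition 2.1.** Let `λ ≠ 0` and `f_λ z = λ ⬝ tan z`. If `W` is a nonempty
connected open set avoiding the poles of `tan`, and the closure of `f_λ(W)` in `ℂ`
is disjoint from the asymptotic values `{iλ, −iλ}`, then `W` lies in a horizontal
strip `{|Im z| < R}`. -/
theorem contained_in_strip_of_closure_image_avoids_asymptotic_values
    (lam : ℂ) (hlam : lam ≠ 0) (f : ℂ → ℂ) (hf : ∀ z, f z = lam * Complex.tan z)
    (W : Set ℂ) (hne : W.Nonempty) (hopen : IsOpen W) (hconn : IsConnected W)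
    (hpoles : ∀ z ∈ W, Complex.cos z ≠ 0)
    (havoid : closure (f '' W) ∩ {Complex.I * lam, -(Complex.I * lam)} = ∅) :
    ∃ R > 0, W ⊆ {z : ℂ | |z.im| < R} := by
  -- Upper bound
  have hup : ∃ R > (0:ℝ), ∀ z ∈ W, z.im < R := by
    by_contra h
    push_neg at h
    have hsel : ∀ n : ℕ, ∃ z ∈ W, (n : ℝ) + 1 ≤ z.im := by
      intro n
      obtain ⟨z, hzW, hz⟩ := h ((n : ℝ) + 1) (by positivity)
      exact ⟨z, hzW, hz⟩
    choose s hsW hsim using hsel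
    have him : Tendsto (fun n => (s n).im) atTop atTop :=
      tendsto_atTop_mono (fun n => hsim n)
        (tendsto_atTop_add_const_right atTop 1 tendsto_natCast_atTop_atTop)
    have htan := tanPaper_tendsto_top s (fun n => hpoles (s n) (hsW n)) him
    have hft : Tendsto (fun n => f (s n)) atTop (nhds (I * lam)) := by
      have := htan.const_mul lam
      simp only [← hf] at this
      simpa [mul_comm] using this
    have hmem : I * lam ∈ closure (f '' W) :=
      mem_closure_of_tendsto hft (Eventually.of_forall fun n => Set.mem_image_of_mem f (hsW n))
    have : I * lam ∈ closure (f '' W) ∩ {Complex.I * lam, -(Complex.I * lam)} :=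
      ⟨hmem, by simp⟩
    rw [havoid] at this
    exact this
  -- Lower bound
  have hdown : ∃ R > (0:ℝ), ∀ z ∈ W, -R < z.im := by
    by_contra h
    push_neg at h
    have hsel : ∀ n : ℕ, ∃ z ∈ W, z.im ≤ -((n : ℝ) + 1) := by
      intro n
      obtain ⟨z, hzW, hz⟩ := h ((n : ℝ) + 1) (by positivity)
      exact ⟨z, hzW, hz⟩
    choose s hsW hsim using hsel
    have him : Tendsto (fun n => (s n).im) atTop atBot := by
      apply tendsto_atBot_mono (fun n => hsim n)
      apply tendsto_neg_atBot_iff.mpr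
      exact tendsto_atTop_add_const_right atTop 1 tendsto_natCast_atTop_atTop
    have htan := tanPaper_tendsto_bot s (fun n => hpoles (s n) (hsW n)) him
    have hft : Tendsto (fun n => f (s n)) atTop (nhds (-(I * lam))) := by
      have := htan.const_mul lam
      simp only [← hf] at this
      have heq : lam * -I = -(I * lam) := by ring
      rw [heq] at this
      exact this
    have hmem : -(I * lam) ∈ closure (f '' W) :=
      mem_closure_of_tendsto hft (Eventually.of_forall fun n => Set.mem_image_of_mem f (hsW n))
    have : -(I * lam) ∈ closure (f '' W) ∩ {Complex.I * lam, -(Complex.I * lam)} :=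
      ⟨hmem, by simp⟩
    rw [havoid] at this
    exact this
  obtain ⟨R₁, hR₁, hub⟩ := hup
  obtain ⟨R₂, hR₂, hlb⟩ := hdown
  refine ⟨max R₁ R₂, lt_max_of_lt_left hR₁, fun z hz => ?_⟩
  simp only [Set.mem_setOf_eq, abs_lt]
  constructor
  · calc -(max R₁ R₂) ≤ -R₂ := by simp
    _ < z.im := hlb z hz
  · exact lt_of_lt_of_le (hub z hz) (le_max_left _ _)
end

section
/- Let λ ∈ ℂ \ {0}. The map z ↦ λ·tan z, restricted to the domain {z ∈ ℂ : cos z ≠ 0} and viewed as a map onto ℂ \ {iλ, −iλ}, is a covering map: every point of ℂ \ {iλ, −iλ} has an open neighborhood that is evenly covered by this map. -/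
open Complex

/-- If `cos z ≠ 0` then `tan z ≠ i`. -/
lemma tan_ne_I_of_cos_ne_zero {z : ℂ} (hz : Complex.cos z ≠ 0) :
    Complex.tan z ≠ Complex.I := by
  intro h
  have hs : Complex.sin z = Complex.I * Complex.cos z := by
    rw [Complex.tan_eq_sin_div_cos, div_eq_iff hz] at h
    exact h
  have h1 := Complex.sin_sq_add_cos_sq z
  rw [hs] at h1
  have h2 : (Complex.I * Complex.cos z) ^ 2 + Complex.cos z ^ 2 = 0 := by
    rw [mul_pow, Complex.I_sq]; ring
  rw [h2] at h1
  exact one_ne_zero h1.symm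

/-- If `cos z ≠ 0` then `tan z ≠ -i`. -/
lemma tan_ne_neg_I_of_cos_ne_zero {z : ℂ} (hz : Complex.cos z ≠ 0) :
    Complex.tan z ≠ -Complex.I := by
  intro h
  have hs : Complex.sin z = -Complex.I * Complex.cos z := by
    rw [Complex.tan_eq_sin_div_cos, div_eq_iff hz] at h
    exact h
  have h1 := Complex.sin_sq_add_cos_sq z
  rw [hs] at h1
  have h2 : (-Complex.I * Complex.cos z) ^ 2 + Complex.cos z ^ 2 = 0 := by
    rw [mul_pow, neg_sq, Complex.I_sq]; ring
  rw [h2] at h1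
  exact one_ne_zero h1.symm

/-- `λ ⬝ tan z ≠ iλ` for `λ ≠ 0` and `cos z ≠ 0`. -/
lemma lam_tan_ne_I_lam {lam z : ℂ} (hlam : lam ≠ 0) (hz : Complex.cos z ≠ 0) :
    lam * Complex.tan z ≠ Complex.I * lam := by
  intro h
  apply tan_ne_I_of_cos_ne_zero hz
  have : lam * Complex.tan z = lam * Complex.I := by rw [h]; ring
  exact mul_left_cancel₀ hlam this

/-- `λ ⬝ tan z ≠ -iλ` for `λ ≠ 0` and `cos z ≠ 0`. -/
lemma lam_tan_ne_neg_I_lam {lam z : ℂ} (hlam : lam ≠ 0) (hz : Complex.cos z ≠ 0) :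
    lam * Complex.tan z ≠ -(Complex.I * lam) := by
  intro h
  apply tan_ne_neg_I_of_cos_ne_zero hz
  have : lam * Complex.tan z = lam * -Complex.I := by rw [h]; ring
  exact mul_left_cancel₀ hlam this


private lemma exists_tan_eq' {v : ℂ} (h1 : v ≠ I) (h2 : v ≠ -I) :
    ∃ z : ℂ, Complex.cos z ≠ 0 ∧ Complex.tan z = v := by
  by_cases hv : v = 0
  · exact ⟨0, by simp, by simp [hv]⟩
  · refine ⟨arctan v, fun hc => hv ?_, tan_arctan h1 h2⟩
    rw [← tan_arctan h1 h2, tan_eq_sin_div_cos, hc, div_zero]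

private lemma cos_add_int_mul_pi_ne_zero' {z : ℂ} (h : Complex.cos z ≠ 0) (k : ℤ) :
    Complex.cos (z + k * Real.pi) ≠ 0 := by
  intro hc
  apply h
  rw [Complex.cos_eq_zero_iff] at hc ⊢
  obtain ⟨n, hn⟩ := hc
  refine ⟨n - k, ?_⟩
  push_cast
  linear_combination hn

private lemma tan_eq_tan_exists' {z z' : ℂ} (hz : Complex.cos z ≠ 0) (hz' : Complex.cos z' ≠ 0)
    (h : Complex.tan z = Complex.tan z') : ∃ k : ℤ, z = z' + k * Real.pi := by
  have hs : Complex.sin (z - z') = 0 := by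
    rw [Complex.sin_sub]
    rw [Complex.tan_eq_sin_div_cos, Complex.tan_eq_sin_div_cos, div_eq_div_iff hz hz'] at h
    linear_combination h
  rw [Complex.sin_eq_zero_iff] at hs
  obtain ⟨k, hk⟩ := hs
  exact ⟨k, by linear_combination hk⟩

private lemma continuousOn_ctan : ContinuousOn Complex.tan {z : ℂ | Complex.cos z ≠ 0} := by
  have : ContinuousOn (fun z => Complex.sin z / Complex.cos z) {z : ℂ | Complex.cos z ≠ 0} :=
    Complex.continuous_sin.continuousOn.div Complex.continuous_cos.continuousOn fun z hz => hz
  simpa only [← Complex.tan_eq_sin_div_cos] using this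

/-- **Covering property of the tangent family.** For `λ ≠ 0`, the map
`z ↦ λ ⬝ tan z`, restricted to `{z : cos z ≠ 0}` and viewed as a map onto
`ℂ \ {iλ, −iλ}`, is a covering map. -/
theorem tangent_family_isCoveringMap (lam : ℂ) (hlam : lam ≠ 0) :
    IsCoveringMap (fun z : {z : ℂ // Complex.cos z ≠ 0} =>
      (⟨lam * Complex.tan z.1,
        lam_tan_ne_I_lam hlam z.2, lam_tan_ne_neg_I_lam hlam z.2⟩ :
        {w : ℂ // w ≠ Complex.I * lam ∧ w ≠ -(Complex.I * lam)})) := by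
  classical
  intro x
  -- find a preimage point z₀ of x
  have hv1 : x.1 / lam ≠ I := by
    intro h
    exact x.2.1 (by rwa [div_eq_iff hlam] at h)
  have hv2 : x.1 / lam ≠ -I := by
    intro h
    exact x.2.2 (by rw [div_eq_iff hlam] at h; rw [h]; ring)
  obtain ⟨z₀, hz₀, htan₀⟩ := exists_tan_eq' hv1 hv2
  have hfz₀ : lam * Complex.tan z₀ = x.1 := by
    rw [htan₀]; field_simp
  -- the local inverse from the inverse function theorem
  have hd : HasStrictDerivAt (fun z => lam * Complex.tan z) (lam * (1 / Complex.cos z₀ ^ 2)) z₀ :=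
    (Complex.hasStrictDerivAt_tan hz₀).const_mul lam
  have hd' : lam * (1 / Complex.cos z₀ ^ 2) ≠ 0 :=
    mul_ne_zero hlam (one_div_ne_zero (pow_ne_zero 2 hz₀))
  have hopen : IsOpen {z : ℂ | Complex.cos z ≠ 0} :=
    isOpen_compl_singleton.preimage Complex.continuous_cos
  set φ := ((hd.hasStrictFDerivAt_equiv hd').toOpenPartialHomeomorph
      (fun z => lam * Complex.tan z)).restrOpen {z : ℂ | Complex.cos z ≠ 0} hopen with hφdef
  have hφcoe : ∀ y, φ y = lam * Complex.tan y := fun y => rfl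
  have hz₀U : z₀ ∈ φ.source := by
    rw [hφdef, OpenPartialHomeomorph.restrOpen_source]
    exact ⟨(hd.hasStrictFDerivAt_equiv hd').mem_toOpenPartialHomeomorph_source, hz₀⟩
  have hUsub : ∀ z ∈ φ.source, Complex.cos z ≠ 0 := by
    intro z hz
    rw [hφdef, OpenPartialHomeomorph.restrOpen_source] at hz
    exact hz.2
  have hmapsto : ∀ z ∈ φ.source, lam * Complex.tan z ∈ φ.target := fun z hz => φ.map_source hz
  have hsymmU : ∀ w ∈ φ.target, φ.symm w ∈ φ.source := fun w hw => φ.map_target hw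
  have hright : ∀ w ∈ φ.target, lam * Complex.tan (φ.symm w) = w := fun w hw => φ.right_inv hw
  have hleft : ∀ z ∈ φ.source, φ.symm (lam * Complex.tan z) = z := fun z hz => φ.left_inv hz
  have hw₀ : x.1 ∈ φ.target := hfz₀ ▸ hmapsto z₀ hz₀U
  -- the "sheet number" function
  set K : {z : ℂ // Complex.cos z ≠ 0} → ℤ :=
    fun z => round (((z.1 - φ.symm (lam * Complex.tan z.1)) / Real.pi).re) with hKdef
  have hπ : (Real.pi : ℂ) ≠ 0 := Complex.ofReal_ne_zero.mpr Real.pi_ne_zero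
  have hKval : ∀ (z : {z : ℂ // Complex.cos z ≠ 0}) (k : ℤ),
      z.1 - φ.symm (lam * Complex.tan z.1) = k * Real.pi → K z = k := by
    intro z k hk
    rw [hKdef]
    simp only [hk, mul_div_assoc, div_self hπ, mul_one, Complex.intCast_re, round_intCast]
  -- every point of the source lies on a sheet
  have hsheet : ∀ z : ℂ, Complex.cos z ≠ 0 → lam * Complex.tan z ∈ φ.target →
      ∃ k : ℤ, z = φ.symm (lam * Complex.tan z) + k * Real.pi := by
    intro z hz hzV
    have hy := hsymmU _ hzV
    have hyy := hright _ hzV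
    have hcosy := hUsub _ hy
    have htt : Complex.tan z = Complex.tan (φ.symm (lam * Complex.tan z)) :=
      (mul_left_cancel₀ hlam (by rw [hyy])).symm
    exact tan_eq_tan_exists' hz hcosy htt
  -- sheets lie in the source
  have hsheet_mem : ∀ y ∈ φ.source, ∀ k : ℤ, Complex.cos (y + k * Real.pi) ≠ 0 ∧
      lam * Complex.tan (y + k * Real.pi) ∈ φ.target ∧
      φ.symm (lam * Complex.tan (y + k * Real.pi)) = y := by
    intro y hy k
    have hcos := cos_add_int_mul_pi_ne_zero' (hUsub y hy) k
    have ht : Complex.tan (y + (k : ℂ) * Real.pi) = Complex.tan y := Complex.tan_add_int_mul_pi y k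
    exact ⟨hcos, by rw [ht]; exact hmapsto y hy, by rw [ht]; exact hleft y hy⟩
  -- continuity of the projection
  have hFc : Continuous (fun z : {z : ℂ // Complex.cos z ≠ 0} => lam * Complex.tan z.1) := by
    apply continuous_const.mul
    exact continuousOn_iff_continuous_restrict.mp continuousOn_ctan
  have hFF : Continuous (fun z : {z : ℂ // Complex.cos z ≠ 0} =>
      (⟨lam * Complex.tan z.1, lam_tan_ne_I_lam hlam z.2, lam_tan_ne_neg_I_lam hlam z.2⟩ :
        {w : ℂ // w ≠ Complex.I * lam ∧ w ≠ -(Complex.I * lam)})) :=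
    hFc.subtype_mk _
  refine IsEvenlyCovered.to_isEvenlyCovered_preimage (I := ℤ) ?_
  refine Exists.elim (p := fun t : Bundle.Trivialization ℤ _ => x ∈ t.baseSet) ?_
    fun t ht => IsEvenlyCovered.of_trivialization ht
  refine ⟨{
    toFun := fun z => (⟨lam * Complex.tan z.1,
        lam_tan_ne_I_lam hlam z.2, lam_tan_ne_neg_I_lam hlam z.2⟩, K z),
    invFun := fun p =>
      if h : Complex.cos (φ.symm p.1.1 + p.2 * Real.pi) ≠ 0 then ⟨_, h⟩ else ⟨0, by simp⟩,
    source := {z : {z : ℂ // Complex.cos z ≠ 0} | lam * Complex.tan z.1 ∈ φ.target},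
    target := (Subtype.val ⁻¹' φ.target) ×ˢ Set.univ,
    map_source' := fun z hz => ⟨hz, Set.mem_univ _⟩,
    map_target' := ?_,
    left_inv' := ?_,
    right_inv' := ?_,
    open_source := φ.open_target.preimage hFc,
    open_target := (φ.open_target.preimage continuous_subtype_val).prod isOpen_univ,
    continuousOn_toFun := ?_,
    continuousOn_invFun := ?_,
    baseSet := Subtype.val ⁻¹' φ.target,
    open_baseSet := φ.open_target.preimage continuous_subtype_val,
    source_eq := rfl,
    target_eq := rfl,
    proj_toFun := fun z _ => rfl }, hw₀⟩
  · -- map_target'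
    rintro ⟨w, k⟩ ⟨hw, -⟩
    obtain ⟨hcos, hmem, -⟩ := hsheet_mem (φ.symm w.1) (hsymmU _ hw) k
    simp only [dif_pos hcos]
    exact hmem
  · -- left_inv'
    intro z hz
    obtain ⟨k, hk⟩ := hsheet z.1 z.2 hz
    have hKz : K z = k := hKval z k (by linear_combination hk)
    have heq : φ.symm (lam * Complex.tan z.1) + (K z : ℂ) * Real.pi = z.1 := by
      rw [hKz]; linear_combination hk.symm
    simp only [heq, dif_pos z.2]
  · -- right_inv'
    rintro ⟨w, k⟩ ⟨hw, -⟩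
    obtain ⟨hcos, hmem, hsymm_eq⟩ := hsheet_mem (φ.symm w.1) (hsymmU _ hw) k
    simp only [dif_pos hcos]
    have ht : Complex.tan (φ.symm w.1 + (k : ℂ) * Real.pi) = Complex.tan (φ.symm w.1) :=
      Complex.tan_add_int_mul_pi _ k
    have h1 : lam * Complex.tan (φ.symm w.1 + (k : ℂ) * Real.pi) = w.1 := by
      rw [ht]; exact hright _ hw
    have h2 : K ⟨φ.symm w.1 + (k : ℂ) * Real.pi, hcos⟩ = k := by
      apply hKval
      simp only [hsymm_eq]
      ring
    exact Prod.ext (Subtype.ext h1) h2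
  · -- continuousOn_toFun
    apply ContinuousOn.prodMk hFF.continuousOn
    intro z hz
    obtain ⟨k, hk⟩ := hsheet z.1 z.2 hz
    have hy : φ.symm (lam * Complex.tan z.1) ∈ φ.source := hsymmU _ hz
    set N : Set {z : ℂ // Complex.cos z ≠ 0} := {z' | z'.1 - (k : ℂ) * Real.pi ∈ φ.source}
      with hNdef
    have hNopen : IsOpen N :=
      φ.open_source.preimage ((continuous_subtype_val.sub continuous_const))
    have hzN : z ∈ N := by
      rw [hNdef]
      show z.1 - (k : ℂ) * Real.pi ∈ φ.source
      have : z.1 - (k : ℂ) * Real.pi = φ.symm (lam * Complex.tan z.1) := by linear_combination hk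
      rw [this]; exact hy
    have hconst : ∀ z' ∈ N, K z' = k := by
      intro z' hz'
      have hy' : z'.1 - (k : ℂ) * Real.pi ∈ φ.source := hz'
      have ht : Complex.tan z'.1 = Complex.tan (z'.1 - (k : ℂ) * Real.pi) := by
        have := Complex.tan_add_int_mul_pi (z'.1 - (k : ℂ) * Real.pi) k
        rw [← this]; ring_nf
      apply hKval
      have hl : φ.symm (lam * Complex.tan z'.1) = z'.1 - (k : ℂ) * Real.pi := by
        rw [ht]; exact hleft _ hy'
      rw [hl]; ring
    have : ContinuousAt K z := by
      have hev : K =ᶠ[nhds z] fun _ => k :=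
        Filter.eventuallyEq_of_mem (hNopen.mem_nhds hzN) hconst
      exact (continuousAt_congr hev).mpr continuousAt_const
    exact this.continuousWithinAt
  · -- continuousOn_invFun
    rw [Topology.IsEmbedding.subtypeVal.isInducing.continuousOn_iff]
    have hc : ContinuousOn (fun p : {w : ℂ // w ≠ Complex.I * lam ∧ w ≠ -(Complex.I * lam)} × ℤ =>
        φ.symm p.1.1 + (p.2 : ℂ) * Real.pi) ((Subtype.val ⁻¹' φ.target) ×ˢ Set.univ) := by
      apply ContinuousOn.add
      · exact φ.symm.continuousOn.comp
          ((continuous_subtype_val.comp continuous_fst).continuousOn) (fun p hp => hp.1)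
      · exact (((continuous_of_discreteTopology (α := ℤ) (f := fun n : ℤ => (n : ℂ))).comp
          continuous_snd).mul continuous_const).continuousOn
    apply hc.congr
    rintro ⟨w, k⟩ ⟨hw, -⟩
    obtain ⟨hcos, -, -⟩ := hsheet_mem (φ.symm w.1) (hsymmU _ hw) k
    simp only [Function.comp, dif_pos hcos]
end

section
/- Let λ ∈ ℂ \ {0}, f_λ(z) = λ·tan z, and let Ω ⊆ ℂ be a bounded open set with cos z ≠ 0 for all z ∈ Ω. Then neither iλ nor −iλ belongs to the frontier (topological boundary in ℂ) of the image f_λ(Ω). -/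
open Complex Bornology

lemma tan_formulas (z : ℂ) (hc : Complex.cos z ≠ 0) :
    Complex.tan z - Complex.I =
      -2 * Complex.I * Complex.exp (2 * z * Complex.I) / (1 + Complex.exp (2 * z * Complex.I)) ∧
    Complex.tan z + Complex.I = 2 * Complex.I / (1 + Complex.exp (2 * z * Complex.I)) ∧
    (1 : ℂ) + Complex.exp (2 * z * Complex.I) ≠ 0 := by
  have hexp : Complex.exp (2 * z * Complex.I)
      = Complex.exp (z * Complex.I) * Complex.exp (z * Complex.I) := by
    rw [← Complex.exp_add]; ring_nf
  have hinv : Complex.exp (-z * Complex.I) * Complex.exp (z * Complex.I) = 1 := by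
    rw [← Complex.exp_add]; ring_nf; exact Complex.exp_zero
  have h1 : 1 + Complex.exp (2 * z * Complex.I)
      = 2 * Complex.exp (z * Complex.I) * Complex.cos z := by
    rw [Complex.cos]; linear_combination hexp - hinv
  have hne : (1 : ℂ) + Complex.exp (2 * z * Complex.I) ≠ 0 := by
    rw [h1]
    exact mul_ne_zero (mul_ne_zero two_ne_zero (Complex.exp_ne_zero _)) hc
  have hs1 : Complex.sin z - Complex.I * Complex.cos z
      = -Complex.I * Complex.exp (z * Complex.I) := by
    rw [Complex.sin, Complex.cos]; ring
  have hs2 : Complex.sin z + Complex.I * Complex.cos z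
      = Complex.I * Complex.exp (-z * Complex.I) := by
    rw [Complex.sin, Complex.cos]; ring
  refine ⟨?_, ?_, hne⟩
  · rw [Complex.tan_eq_sin_div_cos]
    rw [show Complex.sin z / Complex.cos z - Complex.I
        = (Complex.sin z - Complex.I * Complex.cos z) / Complex.cos z by field_simp]
    rw [hs1, div_eq_div_iff hc hne, Complex.cos]
    linear_combination Complex.I * Complex.exp (-z * Complex.I) * hexp
      + Complex.I * Complex.exp (z * Complex.I) * hinv
  · rw [Complex.tan_eq_sin_div_cos]
    rw [show Complex.sin z / Complex.cos z + Complex.I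
        = (Complex.sin z + Complex.I * Complex.cos z) / Complex.cos z by field_simp]
    rw [hs2, div_eq_div_iff hc hne, Complex.cos]
    linear_combination Complex.I * Complex.exp (-z * Complex.I) * hexp
      + Complex.I * Complex.exp (z * Complex.I) * hinv

/-- **Easy direction of Theorem 1.1.** Let `λ ≠ 0` and `f_λ z = λ ⬝ tan z`.
If `Ω ⊆ ℂ` is a bounded open set avoiding the poles of `tan`, then neither of
the asymptotic values `iλ`, `−iλ` lies on the frontier of `f_λ(Ω)`. -/
theorem asymptotic_values_not_on_boundary_of_bounded_image
    (lam : ℂ) (hlam : lam ≠ 0) (f : ℂ → ℂ) (hf : ∀ z, f z = lam * Complex.tan z)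
    (Ω : Set ℂ) (hopen : IsOpen Ω) (hbdd : IsBounded Ω)
    (hpoles : ∀ z ∈ Ω, Complex.cos z ≠ 0) :
    Complex.I * lam ∉ frontier (f '' Ω) ∧ -(Complex.I * lam) ∉ frontier (f '' Ω) := by
  obtain ⟨M, hM⟩ := hbdd.exists_norm_le
  -- uniform bounds on w = exp(2zI)
  have habs : ∀ z ∈ Ω, Real.exp (-(2*M)) ≤ ‖Complex.exp (2 * z * Complex.I)‖ ∧
      ‖1 + Complex.exp (2 * z * Complex.I)‖ ≤ 1 + Real.exp (2*M) := by
    intro z hz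
    have him : |z.im| ≤ M := (Complex.abs_im_le_norm z).trans (hM z hz)
    have hre : (2 * z * Complex.I).re = -(2 * z.im) := by simp
    have hwabs : ‖Complex.exp (2 * z * Complex.I)‖ = Real.exp (-(2 * z.im)) := by
      rw [Complex.norm_exp, hre]
    constructor
    · rw [hwabs]
      apply Real.exp_le_exp.2
      have := (abs_le.1 him).2
      linarith
    · calc ‖1 + Complex.exp (2 * z * Complex.I)‖
          ≤ ‖(1:ℂ)‖ + ‖Complex.exp (2 * z * Complex.I)‖ := norm_add_le _ _
        _ ≤ 1 + Real.exp (2*M) := by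
            rw [hwabs, norm_one]
            have := (abs_le.1 him).1
            exact add_le_add_right (Real.exp_le_exp.2 (by linarith)) 1
  have hden_pos : (0:ℝ) < 1 + Real.exp (2*M) := by positivity
  have hlamabs : (0:ℝ) < ‖lam‖ := by
    simpa [norm_pos_iff] using hlam
  -- key distance bounds
  have key : ∀ z ∈ Ω,
      ‖lam‖ * (2 * Real.exp (-(2*M)) / (1 + Real.exp (2*M))) ≤ ‖f z - Complex.I * lam‖ ∧
      ‖lam‖ * (2 / (1 + Real.exp (2*M))) ≤ ‖f z - -(Complex.I * lam)‖ := by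
    intro z hz
    obtain ⟨hlow, hup⟩ := habs z hz
    obtain ⟨h1, h2, hne⟩ := tan_formulas z (hpoles z hz)
    have hf1 : f z - Complex.I * lam = lam * (Complex.tan z - Complex.I) := by rw [hf]; ring
    have hf2 : f z - -(Complex.I * lam) = lam * (Complex.tan z + Complex.I) := by rw [hf]; ring
    have hwpos : (0:ℝ) < ‖Complex.exp (2 * z * Complex.I)‖ :=
      lt_of_lt_of_le (Real.exp_pos _) hlow
    have hdpos : (0:ℝ) < ‖1 + Complex.exp (2 * z * Complex.I)‖ :=
      norm_pos_iff.mpr hne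
    constructor
    · rw [hf1, norm_mul, h1, norm_div, norm_mul, norm_mul]
      simp only [norm_neg, Complex.norm_two, Complex.norm_I, mul_one]
      apply mul_le_mul_of_nonneg_left _ (norm_nonneg lam)
      rw [div_le_div_iff₀ hden_pos hdpos]
      have : 2 * Real.exp (-(2*M)) * ‖1 + Complex.exp (2 * z * Complex.I)‖
          ≤ 2 * ‖Complex.exp (2 * z * Complex.I)‖ * (1 + Real.exp (2*M)) := by
        apply mul_le_mul
        · exact mul_le_mul_of_nonneg_left hlow (by norm_num)
        · exact hup
        · exact le_of_lt hdpos
        · positivity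
      linarith
    · rw [hf2, norm_mul, h2, norm_div, norm_mul]
      simp only [Complex.norm_two, Complex.norm_I, mul_one]
      apply mul_le_mul_of_nonneg_left _ (norm_nonneg lam)
      rw [div_le_div_iff₀ hden_pos hdpos]
      linarith [mul_le_mul_of_nonneg_left hup (show (0:ℝ) ≤ 2 by norm_num)]
  constructor
  · intro hmem
    have hcl : Complex.I * lam ∈ closure (f '' Ω) := hmem.1
    rw [Metric.mem_closure_iff] at hcl
    obtain ⟨y, ⟨z, hz, rfl⟩, hdist⟩ := hcl (‖lam‖ * (2 * Real.exp (-(2*M)) / (1 + Real.exp (2*M))))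
      (by positivity)
    have := (key z hz).1
    rw [Complex.dist_eq] at hdist
    rw [show Complex.I * lam - f z = -(f z - Complex.I * lam) by ring, norm_neg] at hdist
    linarith
  · intro hmem
    have hcl : -(Complex.I * lam) ∈ closure (f '' Ω) := hmem.1
    rw [Metric.mem_closure_iff] at hcl
    obtain ⟨y, ⟨z, hz, rfl⟩, hdist⟩ := hcl (‖lam‖ * (2 / (1 + Real.exp (2*M))))
      (by positivity)
    have := (key z hz).2
    rw [Complex.dist_eq] at hdist
    rw [show -(Complex.I * lam) - f z = -(f z - -(Complex.I * lam)) by ring, norm_neg] at hdist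
    linarith
end
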